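/- Let n be a positive integer, n₊ = n + 1/2, and design points x_{i,n} = i/n₊ for i = 1,…,n. Define e_{j,n} ∈ ℝⁿ by (e_{j,n})_i = √(2/n₊)·sin((j−1/2)π x_{i,n}). Then e_{1,n},…,e_{n,n} form an orthonormal basis of ℝⁿ, and they are eigenvectors of the matrix U_n with entries (U_n)_{i,k} = min(x_{i,n}, x_{k,n}), with eigenvalues λ_{j,n} = 1/((4n+2) sin²((j−1/2)π/(2n+1))). -/

import Mathlib

open Matrix

section BrownianGridAux
open Real Finset
open Real Finset

lemma tele (θ : ℝ) : ∀ m : ℕ, 2 * Real.sin (θ/2) * ∑ i ∈ Finset.range m, Real.cos ((i+1)*θ)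
    = Real.sin ((2*m+1)*(θ/2)) - Real.sin (θ/2) := by
  intro m
  induction m with
  | zero => simp
  | succ m ih =>
    rw [Finset.sum_range_succ, mul_add, ih]
    have h := Real.sin_sub_sin ((2*(m+1)+1)*(θ/2)) ((2*m+1)*(θ/2))
    have h1 : (((2*(m+1)+1)*(θ/2)) - ((2*m+1)*(θ/2)))/2 = θ/2 := by ring
    have h2 : (((2*(m+1)+1)*(θ/2)) + ((2*m+1)*(θ/2)))/2 = ((m:ℝ)+1)*θ := by ring
    rw [h1, h2] at h
    push_cast
    linarith [h]

lemma cos_sum_eq (θ : ℝ) (m : ℕ) (h1 : Real.sin (θ/2) ≠ 0)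
    (h2 : Real.sin ((2*m+1)*(θ/2)) = 0) :
    ∑ i ∈ Finset.range m, Real.cos ((i+1)*θ) = -(1/2) := by
  have h := tele θ m
  rw [h2] at h
  have : 2 * Real.sin (θ/2) * (∑ i ∈ Finset.range m, Real.cos ((i+1)*θ) - (-(1/2))) = 0 := by
    ring_nf
    ring_nf at h
    linarith [h]
  rcases mul_eq_zero.mp this with h' | h'
  · rcases mul_eq_zero.mp h' with h'' | h''
    · norm_num at h''
    · exact absurd h'' h1
  · linarith [h']
open Real Finset

noncomputable def fcoef (n a l : ℕ) : ℝ :=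
  if a = l then (if a+1 = n then 1 else 2) else if a+1 = l ∨ l+1 = a then -1 else 0

lemma sum_three (n a : ℕ) (ha : a < n) (g : ℕ → ℝ) :
    ∑ l ∈ Finset.range n, fcoef n a l * g l
      = (if a+1 = n then (1:ℝ) else 2) * g a - (if a+1 < n then g (a+1) else 0)
        - (if 0 < a then g (a-1) else 0) := by
  have hpt : ∀ l, fcoef n a l * g l =
      (if l = a then (if a+1 = n then (1:ℝ) else 2) * g l else 0)
      + (if l = a+1 then -(g l) else 0) + (if l+1 = a then -(g l) else 0) := by
    intro l
    unfold fcoef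
    split_ifs <;> first | (exfalso; omega) | ring
  simp only [hpt, Finset.sum_add_distrib]
  rw [Finset.sum_ite_eq' (Finset.range n) a, Finset.sum_ite_eq' (Finset.range n) (a+1)]
  have h3 : ∑ l ∈ Finset.range n, (if l+1 = a then -(g l) else 0)
      = if 0 < a then -(g (a-1)) else 0 := by
    rcases Nat.eq_zero_or_pos a with h | h
    · subst h; simp
    · have : ∀ l, (if l+1 = a then -(g l) else 0) = if l = a-1 then -(g l) else 0 := by
        intro l; split_ifs <;> first | rfl | (exfalso; omega)
      simp only [this]
      rw [Finset.sum_ite_eq' (Finset.range n) (a-1)]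
      simp [Finset.mem_range, h, show a - 1 < n by omega]
  rw [h3]
  simp only [Finset.mem_range, ha, if_true]
  split_ifs <;> first | (exfalso; omega) | ring

lemma key_TU (n a b : ℕ) (ha : a < n) (hb : b < n) :
    ∑ l ∈ Finset.range n, fcoef n a l * ((min (l+1) (b+1) : ℕ) : ℝ)
      = if a = b then 1 else 0 := by
  rw [sum_three n a ha]
  rcases lt_trichotomy a b with h | h | h
  · rw [if_neg (by omega : ¬ a = b), if_pos (show a+1<n by omega),
        show (a+1) ⊓ (b+1) = a+1 by omega, show (a+1+1) ⊓ (b+1) = a+2 by omega,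
        if_neg (show ¬ a+1 = n by omega)]
    by_cases h0 : 0 < a
    · rw [if_pos h0, show (a-1+1) ⊓ (b+1) = a by omega]; push_cast; ring
    · obtain rfl : a = 0 := by omega
      rw [if_neg h0]; push_cast; ring
  · subst h
    rw [if_pos rfl, show (a+1) ⊓ (a+1) = a+1 by omega]
    by_cases h1 : a+1 = n <;> by_cases h0 : 0 < a
    · rw [if_pos h1, if_neg (by omega : ¬ a+1 < n), if_pos h0,
          show (a-1+1) ⊓ (a+1) = a by omega]
      push_cast; ring
    · obtain rfl : a = 0 := by omega
      rw [if_pos h1, if_neg (by omega : ¬ 0+1 < n), if_neg h0]; push_cast; ring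
    · rw [if_neg h1, if_pos (by omega : a+1 < n), show (a+1+1) ⊓ (a+1) = a+1 by omega,
          if_pos h0, show (a-1+1) ⊓ (a+1) = a by omega]
      push_cast; ring
    · obtain rfl : a = 0 := by omega
      rw [if_neg h1, if_pos (by omega : 0+1 < n), show (0+1+1) ⊓ (0+1) = 0+1 by omega,
          if_neg h0]
      push_cast; ring
  · rw [if_neg (by omega : ¬ a = b), show (a+1) ⊓ (b+1) = b+1 by omega,
        if_pos (by omega : 0 < a), show (a-1+1) ⊓ (b+1) = b+1 by omega]
    by_cases h1 : a+1 = n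
    · rw [if_pos h1, if_neg (by omega : ¬ a+1 < n)]; push_cast; ring
    · rw [if_neg h1, if_pos (by omega : a+1 < n), show (a+1+1) ⊓ (b+1) = b+1 by omega]
      push_cast; ring
open Real Finset

lemma sin_rec (α t : ℝ) :
    Real.sin (α*(t+1)) + Real.sin (α*(t-1)) = 2 * Real.cos α * Real.sin (α*t) := by
  rw [show α*(t+1) = α*t + α by ring, show α*(t-1) = α*t - α by ring,
      Real.sin_add, Real.sin_sub]
  ring

lemma sin_odd (j : ℕ) : Real.sin ((2*(j:ℝ)+1)*Real.pi) = 0 := by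
  have := Real.sin_nat_mul_pi (2*j+1)
  push_cast at this
  convert this using 2

lemma cos_odd (j : ℕ) : Real.cos ((2*(j:ℝ)+1)*Real.pi) = -1 := by
  rw [show (2*(j:ℝ)+1)*Real.pi = (j:ℝ)*(2*Real.pi) + Real.pi by ring, Real.cos_add]
  have h1 : Real.cos ((j:ℝ)*(2*Real.pi)) = 1 := Real.cos_nat_mul_two_pi j
  have h2 : Real.sin ((j:ℝ)*(2*Real.pi)) = 0 := by
    have := Real.sin_nat_mul_pi (2*j)
    push_cast at this
    convert this using 2
    ring
  rw [h1, h2, Real.cos_pi]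
  ring

lemma sin_odd_sub (j : ℕ) (t : ℝ) :
    Real.sin ((2*(j:ℝ)+1)*Real.pi - t) = Real.sin t := by
  rw [Real.sin_sub, sin_odd, cos_odd]
  ring

lemma eigen_entry (α : ℝ) (n a : ℕ) (ha : a < n)
    (hbd : Real.sin (α*((n:ℝ)+1)) = Real.sin (α*(n:ℝ))) :
    (if a+1 = n then (1:ℝ) else 2) * Real.sin (α*(((a:ℕ):ℝ)+1))
      - (if a+1 < n then Real.sin (α*((((a+1:ℕ)):ℝ)+1)) else 0)
      - (if 0 < a then Real.sin (α*(((a-1:ℕ):ℝ)+1)) else 0)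
    = (2 - 2*Real.cos α) * Real.sin (α*(((a:ℕ):ℝ)+1)) := by
  have hrec := sin_rec α
  by_cases h1 : a+1 = n <;> by_cases h0 : 0 < a
  · -- last row, a > 0
    rw [if_pos h1, if_neg (by omega : ¬ a+1 < n), if_pos h0]
    have hc : ((a-1:ℕ):ℝ) + 1 = (a:ℝ) := by
      have : ((a-1:ℕ):ℝ) = (a:ℝ) - 1 := by
        have := Nat.cast_sub (by omega : 1 ≤ a) (R := ℝ); simpa using this
      rw [this]; ring
    rw [hc]
    have hr := hrec ((a:ℝ)+1)
    have hn' : (n:ℝ) = (a:ℝ)+1 := by exact_mod_cast congrArg (Nat.cast (R := ℝ)) h1.symm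
    rw [show ((a:ℝ)+1-1) = (a:ℝ) by ring] at hr
    rw [hn'] at hbd
    linarith [hr, hbd]
  · -- n = 1, a = 0
    obtain rfl : a = 0 := by omega
    have hn1 : n = 1 := by omega
    subst hn1
    rw [if_pos rfl, if_neg (by omega), if_neg (by omega)]
    have hr := hrec 1
    rw [show ((1:ℝ)-1) = 0 by ring, mul_zero, Real.sin_zero] at hr
    have hb' : Real.sin (α*(1+1)) = Real.sin (α*1) := by
      have := hbd; push_cast at this; convert this using 3 <;> norm_num
    push_cast
    ring_nf at hr hb' ⊢
    linarith [hr, hb']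
  · -- interior, a > 0
    rw [if_neg h1, if_pos (by omega : a+1 < n), if_pos h0]
    have hc : ((a-1:ℕ):ℝ) + 1 = (a:ℝ) := by
      have : ((a-1:ℕ):ℝ) = (a:ℝ) - 1 := by
        have := Nat.cast_sub (by omega : 1 ≤ a) (R := ℝ); simpa using this
      rw [this]; ring
    rw [hc]
    have hr := hrec ((a:ℝ)+1)
    rw [show ((a:ℝ)+1-1) = (a:ℝ) by ring] at hr
    push_cast
    linarith
  · -- first row, a = 0, n ≥ 2
    obtain rfl : a = 0 := by omega
    rw [if_neg h1, if_pos (by omega : 0+1 < n), if_neg (by omega)]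
    have hr := hrec 1
    rw [show ((1:ℝ)-1) = 0 by ring, mul_zero, Real.sin_zero] at hr
    push_cast
    ring_nf at hr ⊢
    linarith [hr]

end BrownianGridAux

open Real Finset in
/-- Exact eigendecomposition of the covariance matrix of Brownian motion on the
grid `x_{i,n} = i/(n+1/2)`: the discrete sine vectors form an orthonormal basis
of `ℝⁿ` and are eigenvectors of `(U_n)_{i,k} = min(x_i, x_k)` with eigenvalues
`λ_{j,n} = 1/((4n+2) sin²((j-1/2)π/(2n+1)))`. -/
theorem brownian_grid_eigendecomposition (n : ℕ) (hn : 0 < n) :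
    let np : ℝ := n + 1 / 2
    let x : Fin n → ℝ := fun i => ((i : ℕ) + 1) / np
    let e : Fin n → Fin n → ℝ := fun j i =>
      Real.sqrt (2 / np) * Real.sin ((((j : ℕ) : ℝ) + 1 - 1 / 2) * Real.pi * x i)
    let U : Matrix (Fin n) (Fin n) ℝ := fun i k => min (x i) (x k)
    let lam : Fin n → ℝ := fun j =>
      1 / ((4 * n + 2) * (Real.sin ((((j : ℕ) : ℝ) + 1 - 1 / 2) * Real.pi / (2 * n + 1))) ^ 2)
    (∀ j k, dotProduct (e j) (e k) = if j = k then 1 else 0) ∧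
    (∀ j, U.mulVec (e j) = lam j • e j) := by
  intro np x e U lam
  have hnp_def : np = (n:ℝ) + 1/2 := rfl
  have hx : ∀ i : Fin n, x i = (((i:ℕ):ℝ)+1)/np := fun _ => rfl
  have he0 : ∀ j i : Fin n, e j i
      = Real.sqrt (2/np) * Real.sin ((((j:ℕ):ℝ)+1-1/2) * Real.pi * x i) := fun _ _ => rfl
  have hU0 : ∀ i k : Fin n, U i k = min (x i) (x k) := fun _ _ => rfl
  have hlam0 : ∀ j : Fin n, lam j
      = 1 / ((4*(n:ℝ)+2) * (Real.sin ((((j:ℕ):ℝ)+1-1/2) * Real.pi / (2*(n:ℝ)+1)))^2) := fun _ => rfl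
  clear_value np x e U lam
  have hnp : (0:ℝ) < np := by rw [hnp_def]; positivity
  have hnp' : np ≠ 0 := ne_of_gt hnp
  have h2np : 2*np = 2*(n:ℝ)+1 := by rw [hnp_def]; ring
  set α : Fin n → ℝ := fun j => (((j:ℕ):ℝ) + 1/2) * Real.pi / np with hα
  have hαpos : ∀ j : Fin n, 0 < α j := by
    intro j
    apply div_pos (by positivity) hnp
  have hαlt : ∀ j : Fin n, α j < Real.pi := by
    intro j
    rw [hα]
    rw [div_lt_iff₀ hnp]
    have hj : ((j:ℕ):ℝ) + 1/2 < np := by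
      rw [hnp_def]
      have := j.isLt
      have : ((j:ℕ):ℝ) + 1 ≤ (n:ℝ) := by exact_mod_cast this
      linarith
    nlinarith [Real.pi_pos]
  have he : ∀ j i : Fin n, e j i = Real.sqrt (2/np) * Real.sin (α j * (((i:ℕ):ℝ)+1)) := by
    intro j i
    rw [he0, hx, hα]
    congr 1
    field_simp
    ring
  have hmulpi : ∀ j : Fin n, np * α j = (((j:ℕ):ℝ) + 1/2) * Real.pi := by
    intro j; rw [hα]; field_simp
  have hbd : ∀ j : Fin n, Real.sin (α j * ((n:ℝ)+1)) = Real.sin (α j * (n:ℝ)) := by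
    intro j
    have h1 : α j * ((n:ℝ)+1) = (2*((j:ℕ):ℝ)+1)*Real.pi - α j * (n:ℝ) := by
      have h2 : α j * (2*(n:ℝ)+1) = (2*((j:ℕ):ℝ)+1)*Real.pi := by
        rw [← h2np]
        linear_combination 2*(hmulpi j)
      linear_combination h2
    rw [h1, sin_odd_sub]
  have hcos_sum : ∀ j k : Fin n, ∑ i ∈ Finset.range n, Real.cos (((i:ℝ)+1)*(α j + α k)) = -(1/2) := by
    intro j k
    apply cos_sum_eq
    · have hpos : 0 < (α j + α k)/2 := by linarith [hαpos j, hαpos k]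
      have hlt : (α j + α k)/2 < Real.pi := by linarith [hαlt j, hαlt k]
      exact ne_of_gt (Real.sin_pos_of_pos_of_lt_pi hpos hlt)
    · have h3 : (2*(n:ℝ)+1) * ((α j + α k)/2) = (((j:ℕ)+(k:ℕ)+1 : ℕ):ℝ) * Real.pi := by
        rw [← h2np]
        push_cast
        linear_combination (hmulpi j) + (hmulpi k)
      rw [h3, Real.sin_nat_mul_pi]
  have hcos_diff : ∀ j k : Fin n, j ≠ k →
      ∑ i ∈ Finset.range n, Real.cos (((i:ℝ)+1)*(α j - α k)) = -(1/2) := by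
    intro j k hjk
    apply cos_sum_eq
    · intro hcon
      rw [Real.sin_eq_zero_iff] at hcon
      obtain ⟨m, hm⟩ := hcon
      have hαd : (α j - α k)/2 = (((j:ℕ):ℝ) - ((k:ℕ):ℝ)) * Real.pi / (2*np) := by
        rw [hα]; field_simp; ring
      rw [hαd] at hm
      have h2np0 : (2:ℝ)*np ≠ 0 := by positivity
      have hmm : (m:ℝ) * (2*np) = ((j:ℕ):ℝ) - ((k:ℕ):ℝ) := by
        field_simp at hm
        nlinarith [hm, Real.pi_pos]
      rw [h2np] at hmm
      have hz : m * (2*(n:ℤ)+1) = ((j:ℕ):ℤ) - ((k:ℕ):ℤ) := by exact_mod_cast hmm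
      have hj : ((j:ℕ):ℤ) < (n:ℤ) := by exact_mod_cast j.isLt
      have hk : ((k:ℕ):ℤ) < (n:ℤ) := by exact_mod_cast k.isLt
      have hj0 : (0:ℤ) ≤ ((j:ℕ):ℤ) := by positivity
      have hk0 : (0:ℤ) ≤ ((k:ℕ):ℤ) := by positivity
      have hne : (j:ℕ) ≠ (k:ℕ) := fun h => hjk (Fin.ext h)
      have hne' : ((j:ℕ):ℤ) ≠ ((k:ℕ):ℤ) := by exact_mod_cast hne
      rcases lt_trichotomy m 0 with hm0 | hm0 | hm0
      · have : m ≤ -1 := by omega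
        nlinarith [hz]
      · subst hm0; simp at hz; omega
      · have : 1 ≤ m := by omega
        nlinarith [hz]
    · have h3 : (2*(n:ℝ)+1) * ((α j - α k)/2) = ((((j:ℕ):ℤ) - ((k:ℕ):ℤ) : ℤ):ℝ) * Real.pi := by
        rw [← h2np]
        push_cast
        linear_combination (hmulpi j) - (hmulpi k)
      rw [h3, Real.sin_int_mul_pi]
  have hdot : ∀ j k : Fin n, dotProduct (e j) (e k)
      = (2/np) * ((∑ i ∈ Finset.range n, Real.cos (((i:ℝ)+1)*(α j - α k)))
        - (∑ i ∈ Finset.range n, Real.cos (((i:ℝ)+1)*(α j + α k))))/2 := by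
    intro j k
    have hterm : ∀ i : Fin n, e j i * e k i
        = (2/np) * (Real.cos ((((i:ℕ):ℝ)+1)*(α j - α k)) - Real.cos ((((i:ℕ):ℝ)+1)*(α j + α k)))/2 := by
      intro i
      rw [he j i, he k i]
      have hsq : Real.sqrt (2/np) * Real.sqrt (2/np) = 2/np :=
        Real.mul_self_sqrt (by positivity)
      have hps : Real.cos ((((i:ℕ):ℝ)+1)*(α j - α k)) - Real.cos ((((i:ℕ):ℝ)+1)*(α j + α k))
          = 2 * Real.sin (α j * (((i:ℕ):ℝ)+1)) * Real.sin (α k * (((i:ℕ):ℝ)+1)) := by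
        rw [Real.cos_sub_cos]
        rw [show ((((i:ℕ):ℝ)+1)*(α j - α k) + (((i:ℕ):ℝ)+1)*(α j + α k))/2 = α j * (((i:ℕ):ℝ)+1) by ring,
            show ((((i:ℕ):ℝ)+1)*(α j - α k) - (((i:ℕ):ℝ)+1)*(α j + α k))/2 = -(α k * (((i:ℕ):ℝ)+1)) by ring,
            Real.sin_neg]
        ring
      rw [hps, show Real.sqrt (2/np) * Real.sin (α j * (((i:ℕ):ℝ)+1)) * (Real.sqrt (2/np) * Real.sin (α k * (((i:ℕ):ℝ)+1)))
          = (Real.sqrt (2/np) * Real.sqrt (2/np)) * (Real.sin (α j * (((i:ℕ):ℝ)+1)) * Real.sin (α k * (((i:ℕ):ℝ)+1))) from by ring,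
          hsq]
      ring
    calc dotProduct (e j) (e k) = ∑ i : Fin n, e j i * e k i := by simp [dotProduct]
      _ = ∑ i : Fin n, (2/np) * (Real.cos ((((i:ℕ):ℝ)+1)*(α j - α k)) - Real.cos ((((i:ℕ):ℝ)+1)*(α j + α k)))/2 := by
          exact Finset.sum_congr rfl (fun i _ => hterm i)
      _ = ∑ i ∈ Finset.range n, (2/np) * (Real.cos (((i:ℝ)+1)*(α j - α k)) - Real.cos (((i:ℝ)+1)*(α j + α k)))/2 :=
          Fin.sum_univ_eq_sum_range (fun i : ℕ => (2/np) * (Real.cos (((i:ℝ)+1)*(α j - α k)) - Real.cos (((i:ℝ)+1)*(α j + α k)))/2) n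
      _ = (2/np) * ((∑ i ∈ Finset.range n, Real.cos (((i:ℝ)+1)*(α j - α k)))
            - (∑ i ∈ Finset.range n, Real.cos (((i:ℝ)+1)*(α j + α k))))/2 := by
          rw [← Finset.sum_sub_distrib, Finset.mul_sum, Finset.sum_div]
  constructor
  · intro j k
    by_cases hjk : j = k
    · subst hjk
      rw [if_pos rfl, hdot, hcos_sum]
      have hzero : ∑ i ∈ Finset.range n, Real.cos (((i:ℝ)+1)*(α j - α j)) = (n:ℝ) := by
        simp
      rw [hzero, hnp_def]
      field_simp
      ring
    · rw [if_neg hjk, hdot, hcos_sum, hcos_diff j k hjk]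
      ring
  · intro j
    set T : Matrix (Fin n) (Fin n) ℝ := Matrix.of (fun i l => np * fcoef n (i:ℕ) (l:ℕ)) with hT
    have hUx : ∀ l k : Fin n, U l k = ((min ((l:ℕ)+1) ((k:ℕ)+1) : ℕ):ℝ)/np := by
      intro l k
      rw [hU0, hx, hx, min_div_div_right hnp.le]
      congr 1
      rw [Nat.cast_min]
      push_cast
      rfl
    have hTU : T * U = 1 := by
      ext i k
      rw [Matrix.mul_apply, Matrix.one_apply]
      have hterm : ∀ l : Fin n, T i l * U l k
          = fcoef n (i:ℕ) (l:ℕ) * ((min ((l:ℕ)+1) ((k:ℕ)+1) : ℕ):ℝ) := by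
        intro l
        rw [hUx, hT]
        simp only [Matrix.of_apply]
        field_simp
      rw [Finset.sum_congr rfl (fun l _ => hterm l),
          Fin.sum_univ_eq_sum_range (fun l : ℕ => fcoef n (i:ℕ) l * ((min (l+1) ((k:ℕ)+1) : ℕ):ℝ)) n,
          key_TU n i k i.isLt k.isLt]
      simp [Fin.ext_iff]
    have hUT : U * T = 1 := mul_eq_one_comm.mp hTU
    have hβ : (((j:ℕ):ℝ)+1-1/2) * Real.pi / (2*(n:ℝ)+1) = α j / 2 := by
      rw [hα, ← h2np]
      field_simp
      ring
    have hsinβ : Real.sin (α j / 2) ≠ 0 := by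
      apply ne_of_gt
      apply Real.sin_pos_of_pos_of_lt_pi
      · linarith [hαpos j]
      · linarith [hαlt j, Real.pi_pos]
    have hlam_ne : lam j ≠ 0 := by
      rw [hlam0, hβ]
      apply one_div_ne_zero
      apply mul_ne_zero
      · positivity
      · exact pow_ne_zero _ hsinβ
    have hinv : 1 / lam j = np * (2 - 2*Real.cos (α j)) := by
      rw [hlam0, hβ, one_div_one_div,
          show Real.cos (α j) = 1 - 2*Real.sin (α j/2)^2 from by
            rw [show α j = 2*(α j/2) by ring, Real.cos_two_mul, Real.cos_sq']; ring,
          hnp_def]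
      ring
    have hTe : T.mulVec (e j) = (1/lam j) • e j := by
      funext i
      show ∑ l : Fin n, T i l * e j l = _
      have hterm : ∀ l : Fin n, T i l * e j l
          = (np * Real.sqrt (2/np)) * (fcoef n (i:ℕ) (l:ℕ) * Real.sin (α j * (((l:ℕ):ℝ)+1))) := by
        intro l
        rw [he, hT]
        simp only [Matrix.of_apply]
        ring
      rw [Finset.sum_congr rfl (fun l _ => hterm l), ← Finset.mul_sum,
          Fin.sum_univ_eq_sum_range (fun l : ℕ => fcoef n (i:ℕ) l * Real.sin (α j * ((l:ℝ)+1))) n,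
          sum_three n (i:ℕ) i.isLt (fun l : ℕ => Real.sin (α j * ((l:ℝ)+1)))]
      show np * Real.sqrt (2/np) *
          ((if (i:ℕ)+1 = n then (1:ℝ) else 2) * Real.sin (α j * (((i:ℕ):ℝ)+1))
            - (if (i:ℕ)+1 < n then Real.sin (α j * ((((i:ℕ)+1:ℕ):ℝ)+1)) else 0)
            - (if 0 < (i:ℕ) then Real.sin (α j * ((((i:ℕ)-1:ℕ):ℝ)+1)) else 0)) = _
      rw [eigen_entry (α j) n (i:ℕ) i.isLt (hbd j)]
      rw [Pi.smul_apply, smul_eq_mul, he, hinv]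
      ring
    have hid : U.mulVec (T.mulVec (e j)) = e j := by
      rw [Matrix.mulVec_mulVec, hUT, Matrix.one_mulVec]
    rw [hTe, Matrix.mulVec_smul] at hid
    calc U.mulVec (e j) = lam j • ((1/lam j) • U.mulVec (e j)) := by
          rw [smul_smul, mul_one_div, div_self hlam_ne, one_smul]
      _ = lam j • e j := by rw [hid]
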